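/- (Glaisher 1900) For every odd prime p, (p-1)! ≡ p·B_{p-1} - p mod p², where B_{p-1} is the (p-1)-th Bernoulli number; note p·B_{p-1} is a p-adic integer. -/

import Mathlib

open Finset

variable {p : ℕ} [hp : Fact p.Prime]

lemma norm_nat_le_one (k : ℕ) : ‖(k : ℚ_[p])‖ ≤ 1 := by
  have := Padic.norm_int_le_one (p := p) (k : ℤ)
  simpa using this

lemma norm_nat_eq_one_of_not_dvd {k : ℕ} (hk : ¬ p ∣ k) : ‖(k : ℚ_[p])‖ = 1 := by
  refine le_antisymm (norm_nat_le_one k) ?_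
  have h := (Padic.norm_intCast_lt_one_iff (p := p) (k := (k : ℤ))).not
  have : ¬ ‖((k : ℤ) : ℚ_[p])‖ < 1 := by
    rw [h]
    exact_mod_cast hk
  push_cast at this
  linarith [this]

lemma norm_sum_le_of {ι : Type*} (t : Finset ι) (f : ι → ℚ_[p]) {C : ℝ} (hC : 0 ≤ C)
    (h : ∀ i ∈ t, ‖f i‖ ≤ C) : ‖∑ i ∈ t, f i‖ ≤ C := by
  rcases t.eq_empty_or_nonempty with rfl | ht
  · simpa using hC
  · obtain ⟨i, hi, hle⟩ := IsUltrametricDist.exists_norm_finset_sum_le_of_nonempty ht f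
    exact hle.trans (h i hi)

lemma norm_nat_eq (k : ℕ) (hk : k ≠ 0) :
    ‖(k : ℚ_[p])‖ = (p : ℝ) ^ (-(padicValNat p k : ℤ)) := by
  conv_lhs => rw [← Nat.ordProj_mul_ordCompl_eq_self k p]
  rw [Nat.cast_mul, norm_mul, norm_nat_eq_one_of_not_dvd (Nat.not_dvd_ordCompl hp.out hk),
    mul_one, Nat.cast_pow, norm_pow, Padic.norm_p, inv_pow, ← zpow_natCast, ← zpow_neg,
    Nat.factorization_def k hp.out]

lemma norm_pow_div_le {k : ℕ} (hk : 1 ≤ k) :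
    ‖(p : ℚ_[p]) ^ k / (k : ℚ_[p])‖ ≤ (p : ℝ)⁻¹ := by
  have hp1 : (1 : ℝ) < p := by exact_mod_cast hp.out.one_lt
  have hv : padicValNat p k < k := by
    have h1 : p ^ (padicValNat p k) ≤ k := Nat.le_of_dvd (by omega) pow_padicValNat_dvd
    have h2 : k < p ^ k := Nat.lt_pow_self hp.out.one_lt
    have h3 := lt_of_le_of_lt h1 h2
    exact (Nat.pow_lt_pow_iff_right hp.out.one_lt).mp h3
  have e1 : ((p:ℝ)⁻¹) ^ k = (p : ℝ) ^ (-(k:ℤ)) := by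
    rw [inv_pow, ← zpow_natCast, ← zpow_neg]
  rw [norm_div, norm_pow, Padic.norm_p, norm_nat_eq k (by omega), e1,
    ← zpow_sub₀ (by positivity)]
  calc (p:ℝ) ^ (-(k:ℤ) - -(padicValNat p k : ℤ)) ≤ (p:ℝ) ^ (-1 : ℤ) := by
        apply zpow_le_zpow_right₀ (le_of_lt hp1)
        omega
    _ = (p : ℝ)⁻¹ := by simp

lemma norm_pow_div_eq {k : ℕ} (hk : ¬ p ∣ k) :
    ‖(p : ℚ_[p]) ^ k / (k : ℚ_[p])‖ = (p : ℝ) ^ (-(k:ℤ)) := by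
  rw [norm_div, norm_pow, Padic.norm_p, norm_nat_eq_one_of_not_dvd hk, div_one,
    inv_pow, ← zpow_natCast, ← zpow_neg]

lemma faulhaber_q (n : ℕ) : (p : ℚ) * bernoulli n =
    (∑ k ∈ range p, (k : ℚ) ^ n) -
      ∑ i ∈ range n, bernoulli i * (n.choose i : ℚ) * ((p : ℚ) ^ (n + 1 - i) / ((n + 1 - i : ℕ) : ℚ)) := by
  have h := _root_.sum_range_pow p n
  rw [Finset.sum_range_succ] at h
  have hlast : bernoulli n * ((n + 1).choose n : ℚ) * (p : ℚ) ^ (n + 1 - n) / (n + 1)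
      = (p : ℚ) * bernoulli n := by
    rw [Nat.choose_succ_self_right, Nat.add_sub_cancel_left, pow_one]
    have : ((n : ℚ) + 1) ≠ 0 := by positivity
    push_cast
    field_simp
  rw [hlast] at h
  have hterm : ∀ i ∈ range n,
      bernoulli i * ((n + 1).choose i : ℚ) * (p : ℚ) ^ (n + 1 - i) / (n + 1)
        = bernoulli i * (n.choose i : ℚ) * ((p : ℚ) ^ (n + 1 - i) / ((n + 1 - i : ℕ) : ℚ)) := by
    intro i hi
    rw [Finset.mem_range] at hi
    have hkey := Nat.choose_mul_succ_eq n i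
    have hkeyq : (n.choose i : ℚ) * ((n : ℚ) + 1) = ((n + 1).choose i : ℚ) * ((n + 1 - i : ℕ) : ℚ) := by
      exact_mod_cast congrArg (Nat.cast : ℕ → ℚ) hkey
    have h1 : ((n : ℚ) + 1) ≠ 0 := by positivity
    have h2 : ((n + 1 - i : ℕ) : ℚ) ≠ 0 := Nat.cast_ne_zero.mpr (by omega)
    field_simp
    linear_combination (-(bernoulli i) * (p : ℚ) ^ (n + 1 - i)) * hkeyq
  rw [Finset.sum_congr rfl hterm] at h
  linarith [h]

lemma faulhaber_padic (n : ℕ) : (p : ℚ_[p]) * (bernoulli n : ℚ_[p]) =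
    ((∑ k ∈ range p, k ^ n : ℕ) : ℚ_[p]) -
      ∑ i ∈ range n, (bernoulli i : ℚ_[p]) * (n.choose i : ℚ_[p])
        * ((p : ℚ_[p]) ^ (n + 1 - i) / ((n + 1 - i : ℕ) : ℚ_[p])) := by
  have h := faulhaber_q (p := p) n
  have h2 := congrArg (fun q : ℚ => (q : ℚ_[p])) h
  simp only [Rat.cast_mul, Rat.cast_sub, Rat.cast_sum, Rat.cast_pow, Rat.cast_natCast,
    Rat.cast_div] at h2
  push_cast
  push_cast at h2
  convert h2 using 2

lemma norm_bernoulli_mul_p_le (n : ℕ) : ‖(p : ℚ_[p]) * (bernoulli n : ℚ_[p])‖ ≤ 1 := by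
  induction n using Nat.strong_induction_on with
  | _ n ih =>
    rw [faulhaber_padic n]
    have hS : ‖((∑ k ∈ range p, k ^ n : ℕ) : ℚ_[p])‖ ≤ 1 := norm_nat_le_one _
    have hT : ‖∑ i ∈ range n, (bernoulli i : ℚ_[p]) * (n.choose i : ℚ_[p])
        * ((p : ℚ_[p]) ^ (n + 1 - i) / ((n + 1 - i : ℕ) : ℚ_[p]))‖ ≤ 1 := by
      apply norm_sum_le_of _ _ zero_le_one
      intro i hi
      rw [Finset.mem_range] at hi
      have hb : ‖(bernoulli i : ℚ_[p])‖ ≤ (p : ℝ) := by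
        have := ih i hi
        rw [norm_mul, Padic.norm_p] at this
        have hp0 : (0 : ℝ) < p := by exact_mod_cast hp.out.pos
        rw [inv_mul_le_iff₀ hp0] at this
        simpa using this
      have hc : ‖((n.choose i : ℕ) : ℚ_[p])‖ ≤ 1 := norm_nat_le_one _
      have hx : ‖(p : ℚ_[p]) ^ (n + 1 - i) / ((n + 1 - i : ℕ) : ℚ_[p])‖ ≤ (p : ℝ)⁻¹ :=
        norm_pow_div_le (by omega)
      have hp0 : (0 : ℝ) < p := by exact_mod_cast hp.out.pos
      calc ‖(bernoulli i : ℚ_[p]) * (n.choose i : ℚ_[p])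
            * ((p : ℚ_[p]) ^ (n + 1 - i) / ((n + 1 - i : ℕ) : ℚ_[p]))‖
          = ‖(bernoulli i : ℚ_[p])‖ * ‖((n.choose i : ℕ) : ℚ_[p])‖
            * ‖(p : ℚ_[p]) ^ (n + 1 - i) / ((n + 1 - i : ℕ) : ℚ_[p])‖ := by
            rw [norm_mul, norm_mul]
        _ ≤ (p : ℝ) * 1 * (p : ℝ)⁻¹ := by
            apply mul_le_mul _ hx (norm_nonneg _) (by positivity)
            exact mul_le_mul hb hc (norm_nonneg _) (by positivity)
        _ = 1 := by field_simp
    calc ‖_ - _‖ ≤ max ‖((∑ k ∈ range p, k ^ n : ℕ) : ℚ_[p])‖ ‖_‖ := by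
          rw [sub_eq_add_neg]
          refine (Padic.nonarchimedean _ _).trans ?_
          rw [norm_neg]
      _ ≤ 1 := max_le hS hT

lemma binom_aux (x : ℤ) (m : ℕ) : ∃ c : ℤ, (1 + x) ^ m = 1 + m * x + x ^ 2 * c := by
  induction m with
  | zero => exact ⟨0, by norm_num⟩
  | succ k ih =>
    obtain ⟨c, hc⟩ := ih
    exact ⟨c + k + x * c, by rw [pow_succ, hc]; push_cast; ring⟩

lemma prod_one_add {ι : Type*} (s : Finset ι) (f : ι → ℤ) (P : ℤ) :
    ∃ c : ℤ, ∏ a ∈ s, (1 + P * f a) = 1 + P * ∑ a ∈ s, f a + P ^ 2 * c := by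
  classical
  induction s using Finset.induction_on with
  | empty => exact ⟨0, by simp⟩
  | insert a s' h ih =>
    obtain ⟨c, hc⟩ := ih
    refine ⟨c + f a * (∑ b ∈ s', f b) + P * f a * c, ?_⟩
    rw [Finset.prod_insert h, Finset.sum_insert h, hc]
    ring

lemma int_lemma (hodd : Odd p) : ∃ c : ℤ,
    ((∑ k ∈ range p, k ^ (p - 1) : ℕ) : ℤ)
      = ((p - 1).factorial : ℤ) + p + (p : ℤ) ^ 2 * c := by
  have hp2 : 2 ≤ p := hp.out.two_le
  have hp3 : 3 ≤ p := by
    rcases hodd with ⟨m, hm⟩; omega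
  set P : ℤ := (p : ℤ) with hP
  have hPne : P ≠ 0 := by positivity
  -- reduce to Ico 1 p
  have h0 : (∑ k ∈ range p, k ^ (p - 1) : ℕ) = ∑ a ∈ Ico 1 p, a ^ (p - 1) := by
    rw [Finset.range_eq_Ico, Finset.sum_eq_sum_Ico_succ_bot (by omega : 0 < p)]
    have : (0:ℕ) ^ (p - 1) = 0 := Nat.zero_pow (by omega)
    rw [this, zero_add]
  -- Fermat quotients
  set q : ℕ → ℤ := fun a => ((a : ℤ) ^ (p - 1) - 1) / P with hqdef
  have hq : ∀ a ∈ Ico 1 p, (a : ℤ) ^ (p - 1) = 1 + P * q a := by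
    intro a ha
    rw [Finset.mem_Ico] at ha
    have hza : (a : ZMod p) ≠ 0 := by
      rw [Ne, ZMod.natCast_eq_zero_iff]
      intro hdvd
      have := Nat.le_of_dvd (by omega) hdvd
      omega
    have hflt : (a : ZMod p) ^ (p - 1) = 1 := ZMod.pow_card_sub_one_eq_one hza
    have hdvd : P ∣ (a : ℤ) ^ (p - 1) - 1 := by
      rw [hP, ← ZMod.intCast_zmod_eq_zero_iff_dvd]
      push_cast
      rw [hflt]
      ring
    have := Int.ediv_mul_cancel hdvd
    simp only [hqdef]
    rw [mul_comm] at this ⊢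
    rw [Int.ediv_mul_cancel hdvd]
    ring
  set Q : ℤ := ∑ a ∈ Ico 1 p, q a with hQ
  have hsum : (∑ a ∈ Ico 1 p, (a : ℤ) ^ (p - 1)) = ((p - 1 : ℕ) : ℤ) + P * Q := by
    rw [Finset.sum_congr rfl hq, Finset.sum_add_distrib, Finset.sum_const, Nat.card_Ico,
      ← Finset.mul_sum]
    simp [hQ]
  have hprod : (∏ a ∈ Ico 1 p, (a : ℤ) ^ (p - 1)) = ((p - 1).factorial : ℤ) ^ (p - 1) := by
    rw [Finset.prod_pow]
    congr 1
    have : (∏ a ∈ Ico 1 p, (a : ℤ)) = ((∏ a ∈ Ico 1 p, a : ℕ) : ℤ) := by push_cast; rfl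
    rw [this]
    congr 1
    conv_lhs => rw [show p = (p - 1) + 1 by omega]
    exact Finset.prod_Ico_id_eq_factorial (p - 1)
  obtain ⟨c₁, hc₁⟩ := prod_one_add (Ico 1 p) q P
  have hprodq : ((p - 1).factorial : ℤ) ^ (p - 1) = 1 + P * Q + P ^ 2 * c₁ := by
    rw [← hprod, Finset.prod_congr rfl hq, hc₁]
  -- Wilson
  have hwd : P ∣ ((p - 1).factorial : ℤ) + 1 := by
    rw [hP, ← ZMod.intCast_zmod_eq_zero_iff_dvd]
    push_cast
    rw [ZMod.wilsons_lemma]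
    ring
  obtain ⟨w, hw⟩ := hwd
  have hfact : ((p - 1).factorial : ℤ) = -1 + P * w := by linarith [hw]
  -- (−1+Pw)^{p−1} ≡ 1 + Pw
  obtain ⟨m, hm⟩ := hodd
  have hm1 : p - 1 = 2 * m := by omega
  have hP2m : ((m : ℤ)) * 2 = P - 1 := by
    rw [hP]; push_cast; omega
  obtain ⟨c, hcb⟩ := binom_aux (P ^ 2 * w ^ 2 - 2 * P * w) m
  have hpow : ((p - 1).factorial : ℤ) ^ (p - 1)
      = 1 + P * w + P ^ 2 * (m * w ^ 2 - w + (P * w ^ 2 - 2 * w) ^ 2 * c) := by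
    rw [hfact, hm1, pow_mul]
    have e : (-1 + P * w) ^ 2 = 1 + (P ^ 2 * w ^ 2 - 2 * P * w) := by ring
    rw [e, hcb]
    linear_combination (-(P * w)) * hP2m
  -- combine
  have hQw : P * Q = P * w + P ^ 2 * (m * w ^ 2 - w + (P * w ^ 2 - 2 * w) ^ 2 * c - c₁) := by
    have h1 : 1 + P * Q + P ^ 2 * c₁
        = 1 + P * w + P ^ 2 * (m * w ^ 2 - w + (P * w ^ 2 - 2 * w) ^ 2 * c) := by
      rw [← hprodq, hpow]
    linear_combination h1
  refine ⟨m * w ^ 2 - w + (P * w ^ 2 - 2 * w) ^ 2 * c - c₁, ?_⟩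
  have hcast : ((p - 1 : ℕ) : ℤ) = P - 1 := by rw [hP]; push_cast; omega
  rw [h0]
  push_cast
  rw [hsum, hcast, hfact]
  linear_combination hQw

theorem stmt_3 (p : ℕ) [hp : Fact p.Prime] (hodd : Odd p) :
    (∃ w : ℤ_[p], (p : ℚ_[p]) * (bernoulli (p - 1) : ℚ_[p]) = w) ∧
    ∃ z : ℤ_[p], ((p - 1).factorial : ℚ_[p]) =
      (p : ℚ_[p]) * (bernoulli (p - 1) : ℚ_[p]) - (p : ℚ_[p]) + (p : ℚ_[p]) ^ 2 * z := by
  have hp3 : 3 ≤ p := by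
    have := hp.out.two_le
    rcases hodd with ⟨m, hm⟩; omega
  have hp1R : (1 : ℝ) < p := by exact_mod_cast by omega
  have hp0R : (0 : ℝ) < p := by linarith
  have hpQ : (p : ℚ_[p]) ≠ 0 := Nat.cast_ne_zero.mpr (by omega)
  have hfa := faulhaber_padic (p := p) (p - 1)
  rw [show p - 1 + 1 = p from by omega] at hfa
  set S : ℕ := ∑ k ∈ range p, k ^ (p - 1) with hS
  set T : ℚ_[p] := ∑ i ∈ range (p - 1), (bernoulli i : ℚ_[p]) * ((p - 1).choose i : ℚ_[p])
    * ((p : ℚ_[p]) ^ (p - i) / ((p - i : ℕ) : ℚ_[p])) with hTdef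
  -- bound each term of T by p^(-2)
  have hT : ‖T‖ ≤ (p : ℝ) ^ (-2 : ℤ) := by
    apply norm_sum_le_of _ _ (by positivity)
    intro i hi
    rw [Finset.mem_range] at hi
    have hki : 2 ≤ p - i := by omega
    rcases Nat.lt_or_ge i 2 with hi2 | hi2
    · -- i = 0 or 1 : bernoulli has norm ≤ 1, and p - i ≥ p - 1 ≥ 2
      have hb1 : ‖(bernoulli i : ℚ_[p])‖ ≤ 1 := by
        interval_cases i
        · simp
        · rw [bernoulli_one]
          have h2 : ‖((2 : ℕ) : ℚ_[p])‖ = 1 := norm_nat_eq_one_of_not_dvd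
            (fun h => by have := Nat.le_of_dvd (by norm_num) h; omega)
          push_cast at h2
          have he : ((-1/2 : ℚ) : ℚ_[p]) = -(((2:ℚ_[p]))⁻¹) := by push_cast; ring
          rw [he, norm_neg, norm_inv, h2]
          norm_num
      have hx : ‖(p : ℚ_[p]) ^ (p - i) / ((p - i : ℕ) : ℚ_[p])‖ ≤ (p : ℝ) ^ (-2 : ℤ) := by
        rcases Nat.eq_zero_or_pos i with rfl | hipos
        · have he : (p : ℚ_[p]) ^ (p - 0) / ((p - 0 : ℕ) : ℚ_[p]) = (p : ℚ_[p]) ^ (p - 1) := by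
            rw [Nat.sub_zero, div_eq_iff hpQ, ← pow_succ, show p - 1 + 1 = p from by omega]
          rw [he, norm_pow, Padic.norm_p, inv_pow, ← zpow_natCast, ← zpow_neg]
          apply zpow_le_zpow_right₀ hp1R.le
          omega
        · have hnd' : ¬ p ∣ (p - i) := by
            intro h; have := Nat.le_of_dvd (by omega) h; omega
          rw [norm_pow_div_eq hnd']
          apply zpow_le_zpow_right₀ hp1R.le
          omega
      calc ‖(bernoulli i : ℚ_[p]) * ((p - 1).choose i : ℚ_[p])
            * ((p : ℚ_[p]) ^ (p - i) / ((p - i : ℕ) : ℚ_[p]))‖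
          = ‖(bernoulli i : ℚ_[p])‖ * ‖(((p - 1).choose i : ℕ) : ℚ_[p])‖
            * ‖(p : ℚ_[p]) ^ (p - i) / ((p - i : ℕ) : ℚ_[p])‖ := by rw [norm_mul, norm_mul]
        _ ≤ 1 * 1 * ((p : ℝ) ^ (-2 : ℤ)) := by
            apply mul_le_mul _ hx (norm_nonneg _) (by norm_num)
            exact mul_le_mul hb1 (norm_nat_le_one _) (norm_nonneg _) (by norm_num)
        _ = (p : ℝ) ^ (-2 : ℤ) := by ring
    · rcases Nat.even_or_odd i with hev | hod
      · -- i even, 2 ≤ i < p - 1 ⇒ i ≤ p - 3, so 3 ≤ p - i < p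
        have hip3 : i ≤ p - 3 := by
          rcases hodd with ⟨m, hm⟩
          rcases hev with ⟨j, hj⟩
          omega
        have hk3 : 3 ≤ p - i := by omega
        have hnd : ¬ p ∣ (p - i) := by
          intro h; have := Nat.le_of_dvd (by omega) h; omega
        have hb : ‖(bernoulli i : ℚ_[p])‖ ≤ (p : ℝ) := by
          have := norm_bernoulli_mul_p_le (p := p) i
          rw [norm_mul, Padic.norm_p] at this
          rw [inv_mul_le_iff₀ hp0R] at this
          simpa using this
        have hx : ‖(p : ℚ_[p]) ^ (p - i) / ((p - i : ℕ) : ℚ_[p])‖ ≤ (p : ℝ) ^ (-3 : ℤ) := by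
          rw [norm_pow_div_eq hnd]
          apply zpow_le_zpow_right₀ hp1R.le
          omega
        calc ‖(bernoulli i : ℚ_[p]) * ((p - 1).choose i : ℚ_[p])
              * ((p : ℚ_[p]) ^ (p - i) / ((p - i : ℕ) : ℚ_[p]))‖
            = ‖(bernoulli i : ℚ_[p])‖ * ‖(((p - 1).choose i : ℕ) : ℚ_[p])‖
              * ‖(p : ℚ_[p]) ^ (p - i) / ((p - i : ℕ) : ℚ_[p])‖ := by rw [norm_mul, norm_mul]
          _ ≤ (p : ℝ) * 1 * ((p : ℝ) ^ (-3 : ℤ)) := by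
              apply mul_le_mul _ hx (norm_nonneg _) (by positivity)
              exact mul_le_mul hb (norm_nat_le_one _) (norm_nonneg _) (by positivity)
          _ = (p : ℝ) ^ (1 + -3 : ℤ) := by
              rw [zpow_add₀ (ne_of_gt hp0R)]; simp
          _ ≤ (p : ℝ) ^ (-2 : ℤ) := by
              apply zpow_le_zpow_right₀ hp1R.le; norm_num
      · -- i odd, i ≥ 2 ⇒ i ≥ 3 ⇒ bernoulli i = 0
        have hb0 : bernoulli i = 0 := by
          rw [bernoulli_eq_bernoulli'_of_ne_one (by omega)]
          exact bernoulli'_eq_zero_of_odd hod (by omega)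
        rw [hb0]
        simp
  have hTle1 : ‖T‖ ≤ 1 := by
    refine hT.trans ?_
    have : (p : ℝ) ^ (-2 : ℤ) ≤ (p : ℝ) ^ (0 : ℤ) := by
      apply zpow_le_zpow_right₀ hp1R.le; norm_num
    simpa using this
  have hnorm : ‖(p : ℚ_[p]) * (bernoulli (p - 1) : ℚ_[p])‖ ≤ 1 := by
    rw [hfa, sub_eq_add_neg]
    refine (Padic.nonarchimedean _ _).trans ?_
    rw [norm_neg]
    exact max_le (norm_nat_le_one _) hTle1
  constructor
  · exact ⟨⟨_, hnorm⟩, rfl⟩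
  · -- T = p^2 * tq with ‖tq‖ ≤ 1
    set tq : ℚ_[p] := T / (p : ℚ_[p]) ^ 2 with htq
    have hTq : (p : ℚ_[p]) ^ 2 * tq = T := by
      rw [htq]; field_simp
    have htq1 : ‖tq‖ ≤ 1 := by
      rw [htq, norm_div, norm_pow, Padic.norm_p, div_le_one (by positivity)]
      calc ‖T‖ ≤ (p : ℝ) ^ (-2 : ℤ) := hT
        _ = ((p:ℝ)⁻¹) ^ 2 := by
            rw [inv_pow, ← zpow_natCast (p:ℝ), ← zpow_neg]
            norm_num
    clear_value tq
    obtain ⟨c, hc⟩ := int_lemma (p := p) hodd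
    have hScast : ((S : ℕ) : ℚ_[p]) = ((p - 1).factorial : ℚ_[p]) + (p : ℚ_[p])
        + (p : ℚ_[p]) ^ 2 * ((c : ℤ) : ℚ_[p]) := by
      rw [hS]
      exact_mod_cast hc
    obtain ⟨t0, ht0⟩ : ∃ t : ℤ_[p], (t : ℚ_[p]) = tq := ⟨⟨tq, htq1⟩, rfl⟩
    refine ⟨t0 - (c : ℤ_[p]), ?_⟩
    have hz : ((t0 - (c : ℤ_[p]) : ℤ_[p]) : ℚ_[p]) = tq - ((c : ℤ) : ℚ_[p]) := by
      push_cast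
      rw [ht0]
    rw [hz]
    have hfa' : ((S : ℕ) : ℚ_[p]) = (p : ℚ_[p]) * (bernoulli (p - 1) : ℚ_[p]) + T := by
      rw [hfa]; ring
    rw [hScast] at hfa'
    linear_combination hfa' - hTq
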